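/- Let n ≥ 1 be an integer and let t be a complex number with |t| = 1 and t^{2n} ≠ 1. Then (2n-1) t^{2n} - 2n t^{2n-1} + 1 ≠ 0. -/

import Mathlib

/-- If `|t| = 1` and `t^{2n} ≠ 1` then `(2n-1) t^{2n} - 2n t^{2n-1} + 1 ≠ 0`. -/
theorem kernel_factor_ne_zero (n : ℕ) (hn : 1 ≤ n) (t : ℂ) (ht : ‖t‖ = 1)
    (ht' : t ^ (2 * n) ≠ 1) :
    ((2 * n : ℂ) - 1) * t ^ (2 * n) - (2 * n : ℂ) * t ^ (2 * n - 1) + 1 ≠ 0 := by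
  intro h
  set z : ℂ := t ^ (2 * n) with hz
  have h1 : ((2 * n : ℂ) - 1) * z + 1 = (2 * n : ℂ) * t ^ (2 * n - 1) := by
    linear_combination h
  have hn1 : (1 : ℝ) ≤ (n : ℝ) := by exact_mod_cast hn
  have habsz : ‖z‖ = 1 := by
    rw [hz, norm_pow, ht, one_pow]
  have habst : ‖(t ^ (2 * n - 1))‖ = 1 := by
    rw [norm_pow, ht, one_pow]
  have hco : ‖((2 * n : ℂ) - 1)‖ = 2 * n - 1 := by
    have : ((2 * n : ℂ) - 1) = ((2 * (n : ℝ) - 1 : ℝ) : ℂ) := by push_cast; ring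
    rw [this, Complex.norm_real, Real.norm_eq_abs, abs_of_nonneg (by linarith)]
  have hrhs : ‖((2 * n : ℂ) * t ^ (2 * n - 1))‖ = 2 * n := by
    rw [norm_mul, habst, mul_one]
    have : ((2 * n : ℂ)) = ((2 * (n : ℝ) : ℝ) : ℂ) := by push_cast; ring
    rw [this, Complex.norm_real, Real.norm_eq_abs, abs_of_nonneg (by linarith)]
  have heq : ‖(((2 * n : ℂ) - 1) * z + 1)‖
      = ‖(((2 * n : ℂ) - 1) * z)‖ + ‖(1 : ℂ)‖ := by
    rw [h1, hrhs, norm_mul, hco, habsz, mul_one, norm_one]; ring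
  rcases Complex.norm_add_eq_iff.mp heq with h0 | h0 | h0
  · have : ‖(((2 * n : ℂ) - 1) * z)‖ = 0 := by rw [h0, norm_zero]
    rw [norm_mul, hco, habsz, mul_one] at this
    linarith
  · exact one_ne_zero h0
  · rw [Complex.arg_one, Complex.arg_eq_zero_iff] at h0
    set w : ℂ := ((2 * n : ℂ) - 1) * z with hw
    have habs : ‖w‖ = 2 * n - 1 := by
      rw [hw, norm_mul, hco, habsz, mul_one]
    have hwre : w = ((w.re : ℝ) : ℂ) := by
      apply Complex.ext <;> simp [h0.2]
    have habs2 : ‖w‖ = w.re := by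
      rw [hwre, Complex.norm_real, Real.norm_eq_abs, abs_of_nonneg h0.1, Complex.ofReal_re]
    have hweq : w = ((2 * (n : ℝ) - 1 : ℝ) : ℂ) := by
      rw [hwre, habs2.symm, habs]
    have hzeq : z = 1 := by
      have hne : ((2 * n : ℂ) - 1) ≠ 0 := by
        intro hc
        have : ‖((2 * n : ℂ) - 1)‖ = 0 := by rw [hc, norm_zero]
        rw [hco] at this; linarith
      field_simp [hw] at hweq
      rw [hw] at hweq; push_cast at hweq
      exact mul_left_cancel₀ hne (by rw [hweq, mul_one])
    exact ht' hzeq
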